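/- Casimirs of the singularly reduced degenerate Neumann system: with I_0,…,I_ℓ a partition of {0,…,n}, P_σ the orthogonal projection of ℝ^{n+1} onto the coordinates with indices in I_σ, and the invariants V_σ = ½‖P_σ x‖², T_σ = ½‖P_σ y‖², S_σ = ⟨P_σ x, P_σ y⟩, define W_σ = 4·V_σ·T_σ − S_σ², C1 = 2∑_σ V_σ and C2 = ∑_σ S_σ. Then at every point (x,y) with ⟨x,x⟩ ≠ 0, the Dirac brackets of each of the functions W_σ (for every σ), C1 and C2 with each of the functions V_τ, T_τ, S_τ (for every τ) all vanish. -/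

import Mathlib

noncomputable section

/-- The canonical Poisson bracket on `T*ℝ^N = ℝ^N × ℝ^N`:
`[f,g] = ∑ ν (∂f/∂x_ν · ∂g/∂y_ν − ∂f/∂y_ν · ∂g/∂x_ν)`. -/
def canPB {N : ℕ} (f g : (Fin N → ℝ) × (Fin N → ℝ) → ℝ)
    (p : (Fin N → ℝ) × (Fin N → ℝ)) : ℝ :=
  ∑ i : Fin N,
    ((fderiv ℝ f p) ((Pi.single i 1 : Fin N → ℝ), 0) *
        (fderiv ℝ g p) (0, (Pi.single i 1 : Fin N → ℝ))
      - (fderiv ℝ f p) (0, (Pi.single i 1 : Fin N → ℝ)) *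
        (fderiv ℝ g p) ((Pi.single i 1 : Fin N → ℝ), 0))

/-- The constraint function `C1(x,y) = ⟨x,x⟩`. -/
def C1fun {N : ℕ} (p : (Fin N → ℝ) × (Fin N → ℝ)) : ℝ := ∑ ν, p.1 ν * p.1 ν

/-- The constraint function `C2(x,y) = ⟨x,y⟩`. -/
def C2fun {N : ℕ} (p : (Fin N → ℝ) × (Fin N → ℝ)) : ℝ := ∑ ν, p.1 ν * p.2 ν

/-- The Dirac bracket
`{f,g} = [f,g] + (1/(2C1))·[f,C1]·[C2,g] − (1/(2C1))·[f,C2]·[C1,g]`. -/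
def diracPB {N : ℕ} (f g : (Fin N → ℝ) × (Fin N → ℝ) → ℝ)
    (p : (Fin N → ℝ) × (Fin N → ℝ)) : ℝ :=
  canPB f g p + (1 / (2 * C1fun p)) * canPB f C1fun p * canPB C2fun g p
    - (1 / (2 * C1fun p)) * canPB f C2fun p * canPB C1fun g p

open scoped Classical

/-- The invariant `V_σ = ½‖P_σ x‖²` of the block `I_σ = part⁻¹(σ)`. -/
def Vinv {n ℓ : ℕ} (part : Fin (n + 1) → Fin (ℓ + 1)) (σ : Fin (ℓ + 1))
    (p : (Fin (n + 1) → ℝ) × (Fin (n + 1) → ℝ)) : ℝ :=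
  (1 / 2) * ∑ i, if part i = σ then p.1 i * p.1 i else 0

/-- The invariant `T_σ = ½‖P_σ y‖²`. -/
def Tinv {n ℓ : ℕ} (part : Fin (n + 1) → Fin (ℓ + 1)) (σ : Fin (ℓ + 1))
    (p : (Fin (n + 1) → ℝ) × (Fin (n + 1) → ℝ)) : ℝ :=
  (1 / 2) * ∑ i, if part i = σ then p.2 i * p.2 i else 0

/-- The invariant `S_σ = ⟨P_σ x, P_σ y⟩`. -/
def Sinv {n ℓ : ℕ} (part : Fin (n + 1) → Fin (ℓ + 1)) (σ : Fin (ℓ + 1))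
    (p : (Fin (n + 1) → ℝ) × (Fin (n + 1) → ℝ)) : ℝ :=
  ∑ i, if part i = σ then p.1 i * p.2 i else 0

/-- `W_σ = 4 V_σ T_σ − S_σ²`. -/
def Winv {n ℓ : ℕ} (part : Fin (n + 1) → Fin (ℓ + 1)) (σ : Fin (ℓ + 1))
    (p : (Fin (n + 1) → ℝ) × (Fin (n + 1) → ℝ)) : ℝ :=
  4 * Vinv part σ p * Tinv part σ p - (Sinv part σ p) ^ 2

namespace Scratch

abbrev E (N : ℕ) := (Fin N → ℝ) × (Fin N → ℝ)

def Xc {N : ℕ} (i : Fin N) : E N →L[ℝ] ℝ :=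
  (ContinuousLinearMap.proj i).comp (ContinuousLinearMap.fst ℝ (Fin N → ℝ) (Fin N → ℝ))

def Yc {N : ℕ} (i : Fin N) : E N →L[ℝ] ℝ :=
  (ContinuousLinearMap.proj i).comp (ContinuousLinearMap.snd ℝ (Fin N → ℝ) (Fin N → ℝ))

@[simp] lemma Xc_apply {N : ℕ} (i : Fin N) (v : E N) : Xc i v = v.1 i := rfl
@[simp] lemma Yc_apply {N : ℕ} (i : Fin N) (v : E N) : Yc i v = v.2 i := rfl

lemma hasFDerivAt_qsum {N : ℕ} (s : Finset (Fin N)) (A B : Fin N → (E N →L[ℝ] ℝ))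
    (c : ℝ) (p : E N) :
    HasFDerivAt (fun q => c * ∑ i ∈ s, A i q * B i q)
      (c • ∑ i ∈ s, ((A i p) • (B i) + (B i p) • (A i))) p :=
  (HasFDerivAt.fun_sum fun i _ =>
    ((A i).hasFDerivAt.mul (B i).hasFDerivAt)).const_mul c

lemma fderiv_qsum {N : ℕ} (s : Finset (Fin N)) (A B : Fin N → (E N →L[ℝ] ℝ))
    (c : ℝ) (p v : E N) :
    fderiv ℝ (fun q => c * ∑ i ∈ s, A i q * B i q) p v
      = c * ∑ i ∈ s, (A i p * B i v + B i p * A i v) := by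
  rw [(hasFDerivAt_qsum s A B c p).fderiv]
  simp

variable {n ℓ : ℕ} (part : Fin (n + 1) → Fin (ℓ + 1)) (σ τ : Fin (ℓ + 1)) (p : E (n + 1))

lemma Vinv_eq : Vinv part σ = fun q : E (n+1) =>
    (1/2 : ℝ) * ∑ i ∈ Finset.univ.filter (fun i => part i = σ), Xc i q * Xc i q := by
  funext q
  simp [Vinv, Finset.sum_filter]

lemma Tinv_eq : Tinv part σ = fun q : E (n+1) =>
    (1/2 : ℝ) * ∑ i ∈ Finset.univ.filter (fun i => part i = σ), Yc i q * Yc i q := by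
  funext q
  simp [Tinv, Finset.sum_filter]

lemma Sinv_eq : Sinv part σ = fun q : E (n+1) =>
    (1 : ℝ) * ∑ i ∈ Finset.univ.filter (fun i => part i = σ), Xc i q * Yc i q := by
  funext q
  simp [Sinv, Finset.sum_filter]

lemma C1fun_eq : (C1fun : E (n+1) → ℝ) = fun q : E (n+1) =>
    (1 : ℝ) * ∑ i ∈ Finset.univ, Xc i q * Xc i q := by
  funext q; simp [C1fun]

lemma C2fun_eq : (C2fun : E (n+1) → ℝ) = fun q : E (n+1) =>
    (1 : ℝ) * ∑ i ∈ Finset.univ, Xc i q * Yc i q := by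
  funext q; simp [C2fun]

lemma dV (v : E (n+1)) : fderiv ℝ (Vinv part σ) p v
    = ∑ i, if part i = σ then p.1 i * v.1 i else 0 := by
  rw [Vinv_eq, fderiv_qsum, ← Finset.sum_filter, Finset.mul_sum]
  refine Finset.sum_congr rfl fun i _ => ?_
  simp only [Xc_apply]; ring

lemma dT (v : E (n+1)) : fderiv ℝ (Tinv part σ) p v
    = ∑ i, if part i = σ then p.2 i * v.2 i else 0 := by
  rw [Tinv_eq, fderiv_qsum, ← Finset.sum_filter, Finset.mul_sum]
  refine Finset.sum_congr rfl fun i _ => ?_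
  simp only [Yc_apply]; ring

lemma dS (v : E (n+1)) : fderiv ℝ (Sinv part σ) p v
    = ∑ i, if part i = σ then p.2 i * v.1 i + p.1 i * v.2 i else 0 := by
  rw [Sinv_eq, fderiv_qsum, ← Finset.sum_filter, Finset.mul_sum]
  refine Finset.sum_congr rfl fun i _ => ?_
  simp only [Xc_apply, Yc_apply]; ring

lemma dC1 (v : E (n+1)) : fderiv ℝ (C1fun : E (n+1) → ℝ) p v
    = ∑ i, 2 * (p.1 i * v.1 i) := by
  rw [C1fun_eq, fderiv_qsum, Finset.mul_sum]
  refine Finset.sum_congr rfl fun i _ => ?_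
  simp only [Xc_apply]; ring

lemma dC2 (v : E (n+1)) : fderiv ℝ (C2fun : E (n+1) → ℝ) p v
    = ∑ i, (p.2 i * v.1 i + p.1 i * v.2 i) := by
  rw [C2fun_eq, fderiv_qsum, Finset.mul_sum]
  refine Finset.sum_congr rfl fun i _ => ?_
  simp only [Xc_apply, Yc_apply]; ring


lemma dV_x (j : Fin (n+1)) : fderiv ℝ (Vinv part σ) p ((Pi.single j 1 : Fin (n+1) → ℝ), 0)
    = if part j = σ then p.1 j else 0 := by
  rw [dV, Finset.sum_eq_single j (fun b _ hb => by simp [Pi.single_apply, hb]) (by simp)]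
  simp

@[simp] lemma dV_y (j : Fin (n+1)) :
    fderiv ℝ (Vinv part σ) p (0, (Pi.single j 1 : Fin (n+1) → ℝ)) = 0 := by
  rw [dV]; simp

@[simp] lemma dT_x (j : Fin (n+1)) :
    fderiv ℝ (Tinv part σ) p ((Pi.single j 1 : Fin (n+1) → ℝ), 0) = 0 := by
  rw [dT]; simp

lemma dT_y (j : Fin (n+1)) : fderiv ℝ (Tinv part σ) p (0, (Pi.single j 1 : Fin (n+1) → ℝ))
    = if part j = σ then p.2 j else 0 := by
  rw [dT, Finset.sum_eq_single j (fun b _ hb => by simp [Pi.single_apply, hb]) (by simp)]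
  simp

lemma dS_x (j : Fin (n+1)) : fderiv ℝ (Sinv part σ) p ((Pi.single j 1 : Fin (n+1) → ℝ), 0)
    = if part j = σ then p.2 j else 0 := by
  rw [dS, Finset.sum_eq_single j (fun b _ hb => by simp [Pi.single_apply, hb]) (by simp)]
  simp

lemma dS_y (j : Fin (n+1)) : fderiv ℝ (Sinv part σ) p (0, (Pi.single j 1 : Fin (n+1) → ℝ))
    = if part j = σ then p.1 j else 0 := by
  rw [dS, Finset.sum_eq_single j (fun b _ hb => by simp [Pi.single_apply, hb]) (by simp)]
  simp

lemma dC1_x (j : Fin (n+1)) :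
    fderiv ℝ (C1fun : E (n+1) → ℝ) p ((Pi.single j 1 : Fin (n+1) → ℝ), 0) = 2 * p.1 j := by
  rw [dC1, Finset.sum_eq_single j (fun b _ hb => by simp [Pi.single_apply, hb]) (by simp)]
  simp

@[simp] lemma dC1_y (j : Fin (n+1)) :
    fderiv ℝ (C1fun : E (n+1) → ℝ) p (0, (Pi.single j 1 : Fin (n+1) → ℝ)) = 0 := by
  rw [dC1]; simp

lemma dC2_x (j : Fin (n+1)) :
    fderiv ℝ (C2fun : E (n+1) → ℝ) p ((Pi.single j 1 : Fin (n+1) → ℝ), 0) = p.2 j := by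
  rw [dC2, Finset.sum_eq_single j (fun b _ hb => by simp [Pi.single_apply, hb]) (by simp)]
  simp

lemma dC2_y (j : Fin (n+1)) :
    fderiv ℝ (C2fun : E (n+1) → ℝ) p (0, (Pi.single j 1 : Fin (n+1) → ℝ)) = p.1 j := by
  rw [dC2, Finset.sum_eq_single j (fun b _ hb => by simp [Pi.single_apply, hb]) (by simp)]
  simp

lemma dW (v : E (n+1)) : fderiv ℝ (Winv part σ) p v
    = 4 * Tinv part σ p * fderiv ℝ (Vinv part σ) p v
      + 4 * Vinv part σ p * fderiv ℝ (Tinv part σ) p v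
      - 2 * Sinv part σ p * fderiv ℝ (Sinv part σ) p v := by
  have hV0 := Vinv_eq part σ ▸ hasFDerivAt_qsum
      (Finset.univ.filter (fun i => part i = σ)) Xc Xc (1/2 : ℝ) p
  have hT0 := Tinv_eq part σ ▸ hasFDerivAt_qsum
      (Finset.univ.filter (fun i => part i = σ)) Yc Yc (1/2 : ℝ) p
  have hS0 := Sinv_eq part σ ▸ hasFDerivAt_qsum
      (Finset.univ.filter (fun i => part i = σ)) Xc Yc (1 : ℝ) p
  have hV : HasFDerivAt (Vinv part σ) (fderiv ℝ (Vinv part σ) p) p :=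
    hV0.differentiableAt.hasFDerivAt
  have hT : HasFDerivAt (Tinv part σ) (fderiv ℝ (Tinv part σ) p) p :=
    hT0.differentiableAt.hasFDerivAt
  have hS : HasFDerivAt (Sinv part σ) (fderiv ℝ (Sinv part σ) p) p :=
    hS0.differentiableAt.hasFDerivAt
  have hW : HasFDerivAt (Winv part σ)
      (((4 * Vinv part σ p) • fderiv ℝ (Tinv part σ) p
        + Tinv part σ p • ((4:ℝ) • fderiv ℝ (Vinv part σ) p))
        - (Sinv part σ p • fderiv ℝ (Sinv part σ) p
          + Sinv part σ p • fderiv ℝ (Sinv part σ) p)) p := by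
    have h1 := (hV.const_mul (4:ℝ)).mul hT
    have h2 := hS.mul hS
    have he : Winv part σ = fun q =>
        (fun q => 4 * Vinv part σ q) q * Tinv part σ q
          - (fun q => Sinv part σ q * Sinv part σ q) q := by
      funext q; simp [Winv, sq]
    rw [he]
    exact h1.sub h2
  rw [hW.fderiv]
  simp only [ContinuousLinearMap.sub_apply, ContinuousLinearMap.add_apply,
    ContinuousLinearMap.smul_apply, smul_eq_mul]
  ring


lemma sum_mul_ite (a b : Fin (n+1) → ℝ) :
    ∑ j, (if part j = σ then a j else 0) * (if part j = τ then b j else 0)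
      = if σ = τ then ∑ j, (if part j = τ then a j * b j else 0) else 0 := by
  by_cases h : σ = τ
  · subst h; rw [if_pos rfl]
    refine Finset.sum_congr rfl fun j _ => ?_
    split_ifs <;> simp
  · rw [if_neg h]
    refine Finset.sum_eq_zero fun j _ => ?_
    split_ifs with h1 h2
    · exact absurd (h1.symm.trans h2) h
    all_goals simp

lemma twoV : (∑ j, if part j = τ then p.1 j * p.1 j else 0) = 2 * Vinv part τ p := by
  rw [Vinv]; ring

lemma twoT : (∑ j, if part j = τ then p.2 j * p.2 j else 0) = 2 * Tinv part τ p := by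
  rw [Tinv]; ring

lemma Seq : (∑ j, if part j = τ then p.1 j * p.2 j else 0) = Sinv part τ p := rfl

lemma pbVV : canPB (Vinv part σ) (Vinv part τ) p = 0 := by
  simp [canPB, dV_x, dV_y]

lemma pbTT : canPB (Tinv part σ) (Tinv part τ) p = 0 := by
  simp [canPB, dT_x, dT_y]

lemma pbVT : canPB (Vinv part σ) (Tinv part τ) p
    = if σ = τ then Sinv part τ p else 0 := by
  simp only [canPB, dV_x, dV_y, dT_x, dT_y, zero_mul, mul_zero, sub_zero]
  rw [sum_mul_ite]
  by_cases h : σ = τ <;> simp [h, Seq]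

lemma pbTV : canPB (Tinv part σ) (Vinv part τ) p
    = if σ = τ then -(Sinv part τ p) else 0 := by
  simp only [canPB, dT_x, dT_y, dV_x, dV_y, zero_mul, mul_zero, zero_sub,
    Finset.sum_neg_distrib]
  rw [sum_mul_ite]
  by_cases h : σ = τ <;> simp [h]
  rw [show (∑ j, if part j = τ then p.2 j * p.1 j else 0) = Sinv part τ p from by
    rw [← Seq part τ p]; exact Finset.sum_congr rfl fun j _ => by split_ifs <;> ring]

lemma pbVS : canPB (Vinv part σ) (Sinv part τ) p
    = if σ = τ then 2 * Vinv part τ p else 0 := by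
  simp only [canPB, dV_x, dV_y, dS_x, dS_y, zero_mul, mul_zero, sub_zero]
  rw [sum_mul_ite]
  by_cases h : σ = τ <;> simp [h, twoV]

lemma pbSV : canPB (Sinv part σ) (Vinv part τ) p
    = if σ = τ then -(2 * Vinv part τ p) else 0 := by
  simp only [canPB, dS_x, dS_y, dV_x, dV_y, zero_mul, mul_zero, zero_sub,
    Finset.sum_neg_distrib]
  rw [sum_mul_ite]
  by_cases h : σ = τ <;> simp [h, twoV]

lemma pbTS : canPB (Tinv part σ) (Sinv part τ) p
    = if σ = τ then -(2 * Tinv part τ p) else 0 := by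
  simp only [canPB, dT_x, dT_y, dS_x, dS_y, zero_mul, mul_zero, zero_sub,
    Finset.sum_neg_distrib]
  rw [sum_mul_ite]
  by_cases h : σ = τ <;> simp [h, twoT]

lemma pbST : canPB (Sinv part σ) (Tinv part τ) p
    = if σ = τ then 2 * Tinv part τ p else 0 := by
  simp only [canPB, dS_x, dS_y, dT_x, dT_y, zero_mul, mul_zero, sub_zero]
  rw [sum_mul_ite]
  by_cases h : σ = τ <;> simp [h, twoT]

lemma pbSS : canPB (Sinv part σ) (Sinv part τ) p = 0 := by
  simp only [canPB, dS_x, dS_y]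
  refine Finset.sum_eq_zero fun j _ => ?_
  split_ifs <;> ring

lemma pbVC1 : canPB (Vinv part σ) (C1fun : E (n+1) → ℝ) p = 0 := by
  simp [canPB, dV_x, dV_y, dC1_x, dC1_y]

lemma pbTC1 : canPB (Tinv part σ) (C1fun : E (n+1) → ℝ) p = -(2 * Sinv part σ p) := by
  simp only [canPB, dT_x, dT_y, dC1_x, dC1_y, zero_mul, mul_zero, zero_sub,
    Finset.sum_neg_distrib]
  rw [show (∑ j, (if part j = σ then p.2 j else 0) * (2 * p.1 j)) = 2 * Sinv part σ p from by
    rw [Sinv, Finset.mul_sum]; exact Finset.sum_congr rfl fun j _ => by split_ifs <;> ring]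

lemma pbSC1 : canPB (Sinv part σ) (C1fun : E (n+1) → ℝ) p = -(4 * Vinv part σ p) := by
  simp only [canPB, dS_x, dS_y, dC1_x, dC1_y, zero_mul, mul_zero, zero_sub,
    Finset.sum_neg_distrib]
  rw [show (∑ j, (if part j = σ then p.1 j else 0) * (2 * p.1 j)) = 4 * Vinv part σ p from by
    rw [Vinv, Finset.mul_sum, Finset.mul_sum]
    exact Finset.sum_congr rfl fun j _ => by split_ifs <;> ring]

lemma pbVC2 : canPB (Vinv part σ) (C2fun : E (n+1) → ℝ) p = 2 * Vinv part σ p := by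
  simp only [canPB, dV_x, dV_y, dC2_x, dC2_y, zero_mul, mul_zero, sub_zero]
  rw [Vinv, Finset.mul_sum, Finset.mul_sum]
  exact Finset.sum_congr rfl fun j _ => by split_ifs <;> ring

lemma pbTC2 : canPB (Tinv part σ) (C2fun : E (n+1) → ℝ) p = -(2 * Tinv part σ p) := by
  simp only [canPB, dT_x, dT_y, dC2_x, dC2_y, zero_mul, mul_zero, zero_sub,
    Finset.sum_neg_distrib]
  rw [Tinv]
  rw [show (∑ j, (if part j = σ then p.2 j else 0) * p.2 j)
      = 2 * ((1/2 : ℝ) * ∑ i, if part i = σ then p.2 i * p.2 i else 0) from by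
    rw [Finset.mul_sum, Finset.mul_sum]
    exact Finset.sum_congr rfl fun j _ => by split_ifs <;> ring]

lemma pbSC2 : canPB (Sinv part σ) (C2fun : E (n+1) → ℝ) p = 0 := by
  simp only [canPB, dS_x, dS_y, dC2_x, dC2_y]
  refine Finset.sum_eq_zero fun j _ => ?_
  split_ifs <;> ring

lemma pbC1V : canPB (C1fun : E (n+1) → ℝ) (Vinv part τ) p = 0 := by
  simp [canPB, dC1_x, dC1_y, dV_x, dV_y]

lemma pbC1T : canPB (C1fun : E (n+1) → ℝ) (Tinv part τ) p = 2 * Sinv part τ p := by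
  simp only [canPB, dC1_x, dC1_y, dT_x, dT_y, zero_mul, mul_zero, sub_zero]
  rw [Sinv, Finset.mul_sum]
  exact Finset.sum_congr rfl fun j _ => by split_ifs <;> ring

lemma pbC1S : canPB (C1fun : E (n+1) → ℝ) (Sinv part τ) p = 4 * Vinv part τ p := by
  simp only [canPB, dC1_x, dC1_y, dS_x, dS_y, zero_mul, mul_zero, sub_zero]
  rw [Vinv, Finset.mul_sum, Finset.mul_sum]
  exact Finset.sum_congr rfl fun j _ => by split_ifs <;> ring

lemma pbC2V : canPB (C2fun : E (n+1) → ℝ) (Vinv part τ) p = -(2 * Vinv part τ p) := by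
  simp only [canPB, dC2_x, dC2_y, dV_x, dV_y, mul_zero, zero_sub,
    Finset.sum_neg_distrib]
  rw [Vinv, Finset.mul_sum, Finset.mul_sum]
  exact neg_inj.mpr (Finset.sum_congr rfl fun j _ => by split_ifs <;> ring)

lemma pbC2T : canPB (C2fun : E (n+1) → ℝ) (Tinv part τ) p = 2 * Tinv part τ p := by
  simp only [canPB, dC2_x, dC2_y, dT_x, dT_y, mul_zero, sub_zero]
  rw [Tinv]
  rw [show (2 : ℝ) * ((1/2 : ℝ) * ∑ i, if part i = τ then p.2 i * p.2 i else 0)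
      = ∑ i, if part i = τ then p.2 i * p.2 i else 0 from by ring]
  exact Finset.sum_congr rfl fun j _ => by split_ifs <;> ring

lemma pbC2S : canPB (C2fun : E (n+1) → ℝ) (Sinv part τ) p = 0 := by
  simp only [canPB, dC2_x, dC2_y, dS_x, dS_y]
  refine Finset.sum_eq_zero fun j _ => ?_
  split_ifs <;> ring

lemma pbC1C1 : canPB (C1fun : E (n+1) → ℝ) (C1fun : E (n+1) → ℝ) p = 0 := by
  simp [canPB, dC1_x, dC1_y]

lemma pbC1C2 : canPB (C1fun : E (n+1) → ℝ) (C2fun : E (n+1) → ℝ) p = 2 * C1fun p := by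
  simp only [canPB, dC1_x, dC1_y, dC2_x, dC2_y, zero_mul, sub_zero]
  rw [C1fun, Finset.mul_sum]
  exact Finset.sum_congr rfl fun j _ => by ring

lemma pbC2C1 : canPB (C2fun : E (n+1) → ℝ) (C1fun : E (n+1) → ℝ) p = -(2 * C1fun p) := by
  simp only [canPB, dC2_x, dC2_y, dC1_x, dC1_y, mul_zero, zero_sub,
    Finset.sum_neg_distrib]
  rw [C1fun, Finset.mul_sum]
  exact neg_inj.mpr (Finset.sum_congr rfl fun j _ => by ring)

lemma pbC2C2 : canPB (C2fun : E (n+1) → ℝ) (C2fun : E (n+1) → ℝ) p = 0 := by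
  simp only [canPB, dC2_x, dC2_y]
  refine Finset.sum_eq_zero fun j _ => ?_
  ring


lemma pbW (g : E (n+1) → ℝ) : canPB (Winv part σ) g p
    = 4 * Tinv part σ p * canPB (Vinv part σ) g p
      + 4 * Vinv part σ p * canPB (Tinv part σ) g p
      - 2 * Sinv part σ p * canPB (Sinv part σ) g p := by
  simp only [canPB, dW, Finset.mul_sum, ← Finset.sum_sub_distrib, ← Finset.sum_add_distrib]
  exact Finset.sum_congr rfl fun j _ => by ring

lemma pbWV : canPB (Winv part σ) (Vinv part τ) p = 0 := by
  rw [pbW, pbVV, pbTV, pbSV]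
  by_cases h : σ = τ <;> simp [h] <;> ring

lemma pbWT : canPB (Winv part σ) (Tinv part τ) p = 0 := by
  rw [pbW, pbVT, pbTT, pbST]
  by_cases h : σ = τ <;> simp [h] <;> ring

lemma pbWS : canPB (Winv part σ) (Sinv part τ) p = 0 := by
  rw [pbW, pbVS, pbTS, pbSS]
  by_cases h : σ = τ <;> simp [h] <;> ring

lemma pbWC1 : canPB (Winv part σ) (C1fun : E (n+1) → ℝ) p = 0 := by
  rw [pbW, pbVC1, pbTC1, pbSC1]; ring

lemma pbWC2 : canPB (Winv part σ) (C2fun : E (n+1) → ℝ) p = 0 := by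
  rw [pbW, pbVC2, pbTC2, pbSC2]; ring

lemma C1fun_eq_sum : (fun q : E (n+1) => 2 * ∑ σ, Vinv part σ q) = C1fun := by
  funext q
  simp only [Vinv, C1fun, Finset.mul_sum]
  rw [Finset.sum_comm]
  refine Finset.sum_congr rfl fun i _ => ?_
  rw [Finset.sum_congr rfl (fun σ _ => by
    rw [show (2:ℝ) * (1/2 * if part i = σ then q.1 i * q.1 i else 0)
        = if part i = σ then q.1 i * q.1 i else 0 from by split_ifs <;> ring])]
  simp [Finset.sum_ite_eq]

lemma C2fun_eq_sum : (fun q : E (n+1) => ∑ σ, Sinv part σ q) = C2fun := by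
  funext q
  simp only [Sinv, C2fun]
  rw [Finset.sum_comm]
  refine Finset.sum_congr rfl fun i _ => ?_
  simp [Finset.sum_ite_eq]

end Scratch

/-- **Casimirs of the singularly reduced degenerate Neumann system.**
With `W_σ = 4V_σT_σ − S_σ²`, `C1 = 2∑_σ V_σ` and `C2 = ∑_σ S_σ`, at every point with
`⟨x,x⟩ ≠ 0` the Dirac brackets of each of `W_σ`, `C1`, `C2` with each of `V_τ`, `T_τ`,
`S_τ` all vanish. -/
theorem stmt14 (n ℓ : ℕ) (part : Fin (n + 1) → Fin (ℓ + 1))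
    (hpart : Function.Surjective part)
    (p : (Fin (n + 1) → ℝ) × (Fin (n + 1) → ℝ)) (hp : C1fun p ≠ 0) :
    (∀ σ τ : Fin (ℓ + 1),
      diracPB (Winv part σ) (Vinv part τ) p = 0 ∧
      diracPB (Winv part σ) (Tinv part τ) p = 0 ∧
      diracPB (Winv part σ) (Sinv part τ) p = 0) ∧
    (∀ τ : Fin (ℓ + 1),
      diracPB (fun q => 2 * ∑ σ, Vinv part σ q) (Vinv part τ) p = 0 ∧
      diracPB (fun q => 2 * ∑ σ, Vinv part σ q) (Tinv part τ) p = 0 ∧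
      diracPB (fun q => 2 * ∑ σ, Vinv part σ q) (Sinv part τ) p = 0 ∧
      diracPB (fun q => ∑ σ, Sinv part σ q) (Vinv part τ) p = 0 ∧
      diracPB (fun q => ∑ σ, Sinv part σ q) (Tinv part τ) p = 0 ∧
      diracPB (fun q => ∑ σ, Sinv part σ q) (Sinv part τ) p = 0) := by
  have h2 : (2 : ℝ) * C1fun p ≠ 0 := by
    intro h; exact hp (by linarith [mul_eq_zero.mp h])
  constructor
  · intro σ τ
    refine ⟨?_, ?_, ?_⟩ <;>
      simp [diracPB, Scratch.pbWV, Scratch.pbWT, Scratch.pbWS, Scratch.pbWC1, Scratch.pbWC2]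
  · intro τ
    rw [Scratch.C1fun_eq_sum part, Scratch.C2fun_eq_sum part]
    refine ⟨?_, ?_, ?_, ?_, ?_, ?_⟩ <;>
      simp only [diracPB, Scratch.pbC1V, Scratch.pbC1T, Scratch.pbC1S, Scratch.pbC2V, Scratch.pbC2T, Scratch.pbC2S,
        Scratch.pbC1C1, Scratch.pbC1C2, Scratch.pbC2C1, Scratch.pbC2C2] <;>
      field_simp <;> ring
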